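/- Let X and Y be separable real Banach spaces satisfying the bounded approximation property witnessed by sequences (S_d)_{d∈ℕ} of finite-rank continuous linear operators on X and (T_m)_{m∈ℕ} of finite-rank continuous linear operators on Y with S_d x → x for all x ∈ X, T_m y → y for all y ∈ Y, and sup_d ‖S_d‖ ≤ λ, sup_m ‖T_m‖ ≤ λ. Let k ∈ ℕ, p ≥ 1, q ≥ 0, and let μ be a finite Borel measure on X × X^k with ‖μ‖_{k,q,p} := ∫_{X×X^k} (1 + ‖x‖^q) ∏_{j=1}^k (1 + ‖h^j‖^p) dμ < ∞. Let F : X → Y be k-times continuously Fréchet differentiable with a constant C_F such that ‖D^i F(x)‖_{L^i(X,Y)}^p ≤ C_F (1 + ‖x‖^q) for all x ∈ X and 0 ≤ i ≤ k. Then for every ε > 0 there exist d₀, m₀ ∈ ℕ such that for all d ≥ d₀ and m ≥ m₀: max_{0 ≤ i ≤ k} ∫_{X × X^i} ‖D^i F(x)(h^1, …, h^i) − T_m(D^i F(S_d x)(S_d h^1, …, S_d h^i))‖_Y^p dμ^{0:i} < ε^p; that is, the cylindrical approximations F_{d,m} := T_m ∘ F ∘ S_d converge to F in the weighted Sobolev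 norm ‖·‖_{W^{k,p}_{B,μ}}. -/

import Mathlib

open MeasureTheory Filter
open scoped Topology ENNReal NNReal

/-- The marginal `μ^{0:i}` on `X × X^i` of a measure `μ` on `X × X^k`, for `i ≤ k`. -/
noncomputable def marginalUpTo {X : Type*} [MeasurableSpace X] {k : ℕ}
    (μ : Measure (X × (Fin k → X))) (i : ℕ) (hik : i ≤ k) :
    Measure (X × (Fin i → X)) :=
  μ.map fun z => (z.1, fun j => z.2 (Fin.castLE hik j))

private lemma add_rpow_le_two_rpow {A B p : ℝ} (hA : 0 ≤ A) (hB : 0 ≤ B) (hp : 0 ≤ p) :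
    (A + B) ^ p ≤ 2 ^ p * (A ^ p + B ^ p) := by
  have h1 : A + B ≤ 2 * max A B := by
    rcases le_total A B with h | h
    · rw [max_eq_right h]; linarith
    · rw [max_eq_left h]; linarith
  calc (A + B) ^ p ≤ (2 * max A B) ^ p :=
        Real.rpow_le_rpow (by positivity) h1 hp
    _ = 2 ^ p * (max A B) ^ p := Real.mul_rpow (by norm_num) (le_max_of_le_left hA)
    _ ≤ 2 ^ p * (A ^ p + B ^ p) := by
        have hmax : (max A B) ^ p ≤ A ^ p + B ^ p := by
          rcases max_cases A B with ⟨h, _⟩ | ⟨h, _⟩ <;> rw [h]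
          · exact le_add_of_nonneg_right (Real.rpow_nonneg hB p)
          · exact le_add_of_nonneg_left (Real.rpow_nonneg hA p)
        have h2 : (0:ℝ) ≤ 2 ^ p := Real.rpow_nonneg (by norm_num) p
        nlinarith

/-- under the bounded approximation property for separable `X`, `Y`
(witnessed by uniformly bounded sequences of finite-rank operators converging pointwise to
the identities), finiteness of `‖μ‖_{k,q,p}`, and the polynomial growth bound
`‖D^iF(x)‖^p ≤ C_F(1+‖x‖^q)`, the cylindrical approximations `T_m ∘ F ∘ S_d` converge to
`F` in the weighted Sobolev norm `‖·‖_{W^{k,p}_{B,μ}}`. -/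
theorem stmt_12 {X Y : Type*} [NormedAddCommGroup X] [NormedSpace ℝ X] [CompleteSpace X]
    [TopologicalSpace.SeparableSpace X]
    [NormedAddCommGroup Y] [NormedSpace ℝ Y] [CompleteSpace Y]
    [TopologicalSpace.SeparableSpace Y]
    [MeasurableSpace X] [BorelSpace X]
    (S : ℕ → X →L[ℝ] X) (T : ℕ → Y →L[ℝ] Y) (lam : ℝ)
    (hSfr : ∀ d, FiniteDimensional ℝ (LinearMap.range (S d : X →ₗ[ℝ] X)))
    (hTfr : ∀ m, FiniteDimensional ℝ (LinearMap.range (T m : Y →ₗ[ℝ] Y)))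
    (hS : ∀ x : X, Tendsto (fun d => S d x) atTop (𝓝 x))
    (hT : ∀ y : Y, Tendsto (fun m => T m y) atTop (𝓝 y))
    (hSb : ∀ d, ‖S d‖ ≤ lam) (hTb : ∀ m, ‖T m‖ ≤ lam)
    (k : ℕ) (p q : ℝ) (hp : 1 ≤ p) (hq : 0 ≤ q)
    (μ : Measure (X × (Fin k → X))) [IsFiniteMeasure μ]
    (hμ : ∫⁻ z, ENNReal.ofReal (1 + ‖z.1‖ ^ q) *
        ∏ j, (1 + (‖z.2 j‖₊ : ℝ≥0∞) ^ p) ∂μ < ⊤)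
    (F : X → Y) (hF : ContDiff ℝ k F)
    (CF : ℝ)
    (hgrowth : ∀ i ≤ k, ∀ x : X, ‖iteratedFDeriv ℝ i F x‖ ^ p ≤ CF * (1 + ‖x‖ ^ q))
    (ε : ℝ) (hε : 0 < ε) :
    ∃ d₀ m₀ : ℕ, ∀ d ≥ d₀, ∀ m ≥ m₀, ∀ i, ∀ hik : i ≤ k,
      ∫⁻ z,
          (‖iteratedFDeriv ℝ i F z.1 z.2 -
              T m (iteratedFDeriv ℝ i F (S d z.1) (fun j => S d (z.2 j)))‖₊ : ℝ≥0∞) ^ p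
        ∂(marginalUpTo μ i hik) < ENNReal.ofReal (ε ^ p) := by
  classical
  haveI : SecondCountableTopology X := UniformSpace.secondCountable_of_separable X
  have hp0 : (0:ℝ) < p := lt_of_lt_of_le one_pos hp
  set L : ℝ := max 1 lam with hLdef
  have hL1 : (1:ℝ) ≤ L := le_max_left _ _
  have hL0 : (0:ℝ) ≤ L := zero_le_one.trans hL1
  have hSL : ∀ d, ‖S d‖ ≤ L := fun d => (hSb d).trans (le_max_right _ _)
  have hTL : ∀ m, ‖T m‖ ≤ L := fun m => (hTb m).trans (le_max_right _ _)
  have hCF : 0 ≤ CF := by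
    have h := hgrowth 0 (Nat.zero_le k) 0
    have h1 : (0:ℝ) ≤ ‖iteratedFDeriv ℝ 0 F (0:X)‖ ^ p := Real.rpow_nonneg (norm_nonneg _) p
    nlinarith [Real.rpow_nonneg (norm_nonneg (0:X)) q]
  set K : ℝ := 2 ^ p * (CF * (1 + (L ^ (k+1)) ^ p * L ^ q)) with hKdef
  have hK0 : 0 ≤ K := by
    have h2p : (0:ℝ) ≤ 2 ^ p := Real.rpow_nonneg (by norm_num) p
    have : (0:ℝ) ≤ 1 + (L ^ (k+1)) ^ p * L ^ q := by positivity
    rw [hKdef]; exact mul_nonneg h2p (mul_nonneg hCF this)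
  -- pointwise real bound
  have key : ∀ (i : ℕ), i ≤ k → ∀ (d m : ℕ) (x : X) (h : Fin i → X),
      ‖iteratedFDeriv ℝ i F x h - T m (iteratedFDeriv ℝ i F (S d x) fun j => S d (h j))‖ ^ p
        ≤ K * ((1 + ‖x‖ ^ q) * ∏ j, (1 + ‖h j‖ ^ p)) := by
    intro i hik d m x h
    have hA0 : (0:ℝ) ≤ ‖iteratedFDeriv ℝ i F x‖ := norm_nonneg _
    have hB0 : (0:ℝ) ≤ ‖iteratedFDeriv ℝ i F (S d x)‖ := norm_nonneg _
    have hP0 : (0:ℝ) ≤ ∏ j, ‖h j‖ := Finset.prod_nonneg fun j _ => norm_nonneg _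
    have hC0 : (0:ℝ) ≤ L ^ (k+1) := pow_nonneg hL0 _
    have e4 : (∏ j, ‖S d (h j)‖) ≤ L ^ i * ∏ j, ‖h j‖ := by
      calc (∏ j, ‖S d (h j)‖) ≤ ∏ j, L * ‖h j‖ :=
          Finset.prod_le_prod (fun j _ => norm_nonneg _) fun j _ =>
            ((S d).le_opNorm (h j)).trans (mul_le_mul_of_nonneg_right (hSL d) (norm_nonneg _))
        _ = L ^ i * ∏ j, ‖h j‖ := by
          rw [Finset.prod_mul_distrib, Finset.prod_const, Finset.card_univ, Fintype.card_fin]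
    have e2 : ‖T m (iteratedFDeriv ℝ i F (S d x) fun j => S d (h j))‖
        ≤ L ^ (k+1) * ‖iteratedFDeriv ℝ i F (S d x)‖ * ∏ j, ‖h j‖ := by
      calc ‖T m (iteratedFDeriv ℝ i F (S d x) fun j => S d (h j))‖
          ≤ L * ‖iteratedFDeriv ℝ i F (S d x) fun j => S d (h j)‖ :=
            ((T m).le_opNorm _).trans (mul_le_mul_of_nonneg_right (hTL m) (norm_nonneg _))
        _ ≤ L * (‖iteratedFDeriv ℝ i F (S d x)‖ * (L ^ i * ∏ j, ‖h j‖)) := by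
            refine mul_le_mul_of_nonneg_left ?_ hL0
            exact ((iteratedFDeriv ℝ i F (S d x)).le_opNorm _).trans
              (mul_le_mul_of_nonneg_left e4 hB0)
        _ = L ^ (i+1) * ‖iteratedFDeriv ℝ i F (S d x)‖ * ∏ j, ‖h j‖ := by ring
        _ ≤ L ^ (k+1) * ‖iteratedFDeriv ℝ i F (S d x)‖ * ∏ j, ‖h j‖ := by
            have hpow : L ^ (i+1) ≤ L ^ (k+1) := pow_le_pow_right₀ hL1 (by omega)
            have := mul_nonneg hB0 hP0
            nlinarith
    have h1 : ‖iteratedFDeriv ℝ i F x h - T m (iteratedFDeriv ℝ i F (S d x) fun j => S d (h j))‖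
        ≤ (‖iteratedFDeriv ℝ i F x‖ + L ^ (k+1) * ‖iteratedFDeriv ℝ i F (S d x)‖) * ∏ j, ‖h j‖ := by
      calc ‖iteratedFDeriv ℝ i F x h - T m (iteratedFDeriv ℝ i F (S d x) fun j => S d (h j))‖
          ≤ ‖iteratedFDeriv ℝ i F x h‖
            + ‖T m (iteratedFDeriv ℝ i F (S d x) fun j => S d (h j))‖ := norm_sub_le _ _
        _ ≤ ‖iteratedFDeriv ℝ i F x‖ * ∏ j, ‖h j‖
            + L ^ (k+1) * ‖iteratedFDeriv ℝ i F (S d x)‖ * ∏ j, ‖h j‖ :=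
            add_le_add ((iteratedFDeriv ℝ i F x).le_opNorm h) e2
        _ = (‖iteratedFDeriv ℝ i F x‖ + L ^ (k+1) * ‖iteratedFDeriv ℝ i F (S d x)‖) * ∏ j, ‖h j‖ := by
            ring
    have h2 : ‖iteratedFDeriv ℝ i F x h - T m (iteratedFDeriv ℝ i F (S d x) fun j => S d (h j))‖ ^ p
        ≤ (‖iteratedFDeriv ℝ i F x‖ + L ^ (k+1) * ‖iteratedFDeriv ℝ i F (S d x)‖) ^ p
          * (∏ j, ‖h j‖) ^ p := by
      rw [← Real.mul_rpow (by positivity) hP0]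
      exact Real.rpow_le_rpow (norm_nonneg _) h1 hp0.le
    have h3 : (‖iteratedFDeriv ℝ i F x‖ + L ^ (k+1) * ‖iteratedFDeriv ℝ i F (S d x)‖) ^ p
        ≤ 2 ^ p * (‖iteratedFDeriv ℝ i F x‖ ^ p
            + (L ^ (k+1)) ^ p * ‖iteratedFDeriv ℝ i F (S d x)‖ ^ p) := by
      have := add_rpow_le_two_rpow hA0 (mul_nonneg hC0 hB0) hp0.le
      rwa [Real.mul_rpow hC0 hB0] at this
    have h4 : ‖iteratedFDeriv ℝ i F x‖ ^ p ≤ CF * (1 + ‖x‖ ^ q) := hgrowth i hik x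
    have h5 : ‖iteratedFDeriv ℝ i F (S d x)‖ ^ p ≤ CF * (L ^ q * (1 + ‖x‖ ^ q)) := by
      have h6 : ‖S d x‖ ^ q ≤ L ^ q * ‖x‖ ^ q := by
        calc ‖S d x‖ ^ q ≤ (L * ‖x‖) ^ q :=
            Real.rpow_le_rpow (norm_nonneg _)
              (((S d).le_opNorm x).trans (mul_le_mul_of_nonneg_right (hSL d) (norm_nonneg x))) hq
          _ = L ^ q * ‖x‖ ^ q := Real.mul_rpow hL0 (norm_nonneg x)
      have hLq1 : (1:ℝ) ≤ L ^ q := Real.one_le_rpow hL1 hq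
      have hg := hgrowth i hik (S d x)
      have hxq : (0:ℝ) ≤ ‖x‖ ^ q := Real.rpow_nonneg (norm_nonneg x) q
      nlinarith
    have h7 : (∏ j, ‖h j‖) ^ p ≤ ∏ j, (1 + ‖h j‖ ^ p) := by
      rw [← Real.finset_prod_rpow _ _ (fun j _ => norm_nonneg _) p]
      exact Finset.prod_le_prod (fun j _ => Real.rpow_nonneg (norm_nonneg _) _)
        fun j _ => le_add_of_nonneg_left zero_le_one
    have h2p : (0:ℝ) ≤ 2 ^ p := Real.rpow_nonneg (by norm_num) p
    have hq1 : (0:ℝ) ≤ ∏ j, (1 + ‖h j‖ ^ p) :=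
      Finset.prod_nonneg fun j _ => by positivity
    calc ‖iteratedFDeriv ℝ i F x h - T m (iteratedFDeriv ℝ i F (S d x) fun j => S d (h j))‖ ^ p
        ≤ (‖iteratedFDeriv ℝ i F x‖ + L ^ (k+1) * ‖iteratedFDeriv ℝ i F (S d x)‖) ^ p
          * (∏ j, ‖h j‖) ^ p := h2
      _ ≤ (2 ^ p * (‖iteratedFDeriv ℝ i F x‖ ^ p
            + (L ^ (k+1)) ^ p * ‖iteratedFDeriv ℝ i F (S d x)‖ ^ p))
          * ∏ j, (1 + ‖h j‖ ^ p) := by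
          refine mul_le_mul h3 h7 (Real.rpow_nonneg hP0 p) ?_
          exact mul_nonneg h2p (add_nonneg (Real.rpow_nonneg hA0 p)
            (mul_nonneg (Real.rpow_nonneg hC0 p) (Real.rpow_nonneg hB0 p)))
      _ ≤ (2 ^ p * (CF * (1 + ‖x‖ ^ q)
            + (L ^ (k+1)) ^ p * (CF * (L ^ q * (1 + ‖x‖ ^ q)))))
          * ∏ j, (1 + ‖h j‖ ^ p) := by
          refine mul_le_mul_of_nonneg_right (mul_le_mul_of_nonneg_left ?_ h2p) hq1
          exact add_le_add h4 (mul_le_mul_of_nonneg_left h5 (Real.rpow_nonneg hC0 p))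
      _ = K * ((1 + ‖x‖ ^ q) * ∏ j, (1 + ‖h j‖ ^ p)) := by rw [hKdef]; ring
  -- main eventual statement for each i
  have main : ∀ (i : ℕ) (hik : i ≤ k),
      ∀ᶠ dm : ℕ × ℕ in atTop ×ˢ atTop,
        ∫⁻ z, ENNReal.ofReal
            (‖iteratedFDeriv ℝ i F z.1 z.2 -
              T dm.2 (iteratedFDeriv ℝ i F (S dm.1 z.1) fun j => S dm.1 (z.2 j))‖ ^ p)
          ∂(marginalUpTo μ i hik) < ENNReal.ofReal (ε ^ p) := by
    intro i hik
    have hFc : Continuous (iteratedFDeriv ℝ i F) :=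
      hF.continuous_iteratedFDeriv (by exact_mod_cast hik)
    have c1 : Continuous fun z : X × (Fin i → X) => iteratedFDeriv ℝ i F z.1 z.2 :=
      continuous_eval.comp ((hFc.comp continuous_fst).prodMk continuous_snd)
    have c2 : ∀ d m : ℕ, Continuous fun z : X × (Fin i → X) =>
        T m (iteratedFDeriv ℝ i F (S d z.1) fun j => S d (z.2 j)) := fun d m =>
      (T m).continuous.comp <| continuous_eval.comp <|
        ((hFc.comp ((S d).continuous.comp continuous_fst)).prodMk
          (continuous_pi fun j => (S d).continuous.comp ((continuous_apply j).comp continuous_snd)))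
    have hmeasG : ∀ dm : ℕ × ℕ, Measurable fun z : X × (Fin i → X) =>
        ENNReal.ofReal
          (‖iteratedFDeriv ℝ i F z.1 z.2 -
            T dm.2 (iteratedFDeriv ℝ i F (S dm.1 z.1) fun j => S dm.1 (z.2 j))‖ ^ p) := fun dm =>
      (((c1.sub (c2 dm.1 dm.2)).norm).measurable.pow_const p).ennreal_ofReal
    -- bound function
    have hconv : ∀ (n : ℕ) (x : X) (h : Fin n → X),
        ENNReal.ofReal ((1 + ‖x‖ ^ q) * ∏ j, (1 + ‖h j‖ ^ p))
          = ENNReal.ofReal (1 + ‖x‖ ^ q) * ∏ j, (1 + (‖h j‖₊ : ℝ≥0∞) ^ p) := by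
      intro n x h
      rw [ENNReal.ofReal_mul (by positivity),
        ENNReal.ofReal_prod_of_nonneg (fun j _ => by positivity)]
      congr 1
      refine Finset.prod_congr rfl fun j _ => ?_
      rw [ENNReal.ofReal_add zero_le_one (Real.rpow_nonneg (norm_nonneg _) _),
        ENNReal.ofReal_one, ← ENNReal.ofReal_rpow_of_nonneg (norm_nonneg _) hp0.le,
        ofReal_norm, enorm_eq_nnnorm]
    have hbmeas : Measurable fun z : X × (Fin i → X) =>
        ENNReal.ofReal (K * ((1 + ‖z.1‖ ^ q) * ∏ j, (1 + ‖z.2 j‖ ^ p))) := by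
      apply Measurable.ennreal_ofReal
      apply Measurable.const_mul
      apply Measurable.mul
      · exact measurable_const.add (measurable_fst.norm.pow_const q)
      · exact Finset.measurable_prod _ fun j _ =>
          measurable_const.add (((measurable_pi_apply j).comp measurable_snd).norm.pow_const p)
    have hπ : Measurable fun z : X × (Fin k → X) =>
        ((z.1, fun j => z.2 (Fin.castLE hik j)) : X × (Fin i → X)) :=
      measurable_fst.prodMk (measurable_pi_lambda _ fun j =>
        (measurable_pi_apply _).comp measurable_snd)
    have hbfin : ∫⁻ z, ENNReal.ofReal (K * ((1 + ‖z.1‖ ^ q) * ∏ j, (1 + ‖z.2 j‖ ^ p)))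
        ∂(marginalUpTo μ i hik) ≠ ⊤ := by
      rw [marginalUpTo, lintegral_map hbmeas hπ]
      have hpt : ∀ z : X × (Fin k → X),
          ENNReal.ofReal (K * ((1 + ‖z.1‖ ^ q) * ∏ j : Fin i, (1 + ‖z.2 (Fin.castLE hik j)‖ ^ p)))
            ≤ ENNReal.ofReal K *
              (ENNReal.ofReal (1 + ‖z.1‖ ^ q) * ∏ j, (1 + (‖z.2 j‖₊ : ℝ≥0∞) ^ p)) := by
        intro z
        rw [ENNReal.ofReal_mul hK0, hconv]
        refine mul_le_mul_right (mul_le_mul_right ?_ _) _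
        calc (∏ j : Fin i, (1 + (‖z.2 (Fin.castLE hik j)‖₊ : ℝ≥0∞) ^ p))
            = ∏ j ∈ Finset.univ.map (Fin.castLEEmb hik),
                (1 + (‖z.2 j‖₊ : ℝ≥0∞) ^ p) := by rw [Finset.prod_map]; rfl
          _ ≤ ∏ j, (1 + (‖z.2 j‖₊ : ℝ≥0∞) ^ p) :=
              Finset.prod_le_prod_of_subset_of_one_le' (Finset.subset_univ _)
                (fun j _ _ => le_self_add)
      have hfin : (∫⁻ z, ENNReal.ofReal
              (K * ((1 + ‖z.1‖ ^ q) * ∏ j : Fin i, (1 + ‖z.2 (Fin.castLE hik j)‖ ^ p))) ∂μ) < ⊤ :=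
        calc ∫⁻ z, ENNReal.ofReal
              (K * ((1 + ‖z.1‖ ^ q) * ∏ j : Fin i, (1 + ‖z.2 (Fin.castLE hik j)‖ ^ p))) ∂μ
          ≤ ∫⁻ z, ENNReal.ofReal K *
              (ENNReal.ofReal (1 + ‖z.1‖ ^ q) * ∏ j, (1 + (‖z.2 j‖₊ : ℝ≥0∞) ^ p)) ∂μ :=
            lintegral_mono hpt
        _ = ENNReal.ofReal K * ∫⁻ z,
              ENNReal.ofReal (1 + ‖z.1‖ ^ q) * ∏ j, (1 + (‖z.2 j‖₊ : ℝ≥0∞) ^ p) ∂μ :=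
            lintegral_const_mul' _ _ ENNReal.ofReal_ne_top
        _ < ⊤ := ENNReal.mul_lt_top ENNReal.ofReal_lt_top hμ
      exact hfin.ne
    -- pointwise limit
    have hlimG : ∀ z : X × (Fin i → X),
        Tendsto (fun dm : ℕ × ℕ => ENNReal.ofReal
          (‖iteratedFDeriv ℝ i F z.1 z.2 -
            T dm.2 (iteratedFDeriv ℝ i F (S dm.1 z.1) fun j => S dm.1 (z.2 j))‖ ^ p))
          (atTop ×ˢ atTop) (𝓝 0) := by
      intro z
      have hwy : Tendsto (fun d => iteratedFDeriv ℝ i F (S d z.1) fun j => S d (z.2 j))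
          atTop (𝓝 (iteratedFDeriv ℝ i F z.1 z.2)) := by
        have h1 : Tendsto (fun d => ((iteratedFDeriv ℝ i F (S d z.1)),
            fun j => S d (z.2 j))) atTop (𝓝 (iteratedFDeriv ℝ i F z.1, z.2)) :=
          ((hFc.tendsto z.1).comp (hS z.1)).prodMk_nhds
            (tendsto_pi_nhds.2 fun j => hS (z.2 j))
        exact (continuous_eval.tendsto _).comp h1
      have t1 : Tendsto (fun m => ‖iteratedFDeriv ℝ i F z.1 z.2 -
          T m (iteratedFDeriv ℝ i F z.1 z.2)‖) atTop (𝓝 0) := by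
        have := ((tendsto_const_nhds (x := iteratedFDeriv ℝ i F z.1 z.2)).sub (hT (iteratedFDeriv ℝ i F z.1 z.2))).norm
        simpa using this
      have t2 : Tendsto (fun d => L * ‖iteratedFDeriv ℝ i F z.1 z.2 -
          (iteratedFDeriv ℝ i F (S d z.1) fun j => S d (z.2 j))‖) atTop (𝓝 0) := by
        have := (((tendsto_const_nhds (x := iteratedFDeriv ℝ i F z.1 z.2)).sub hwy).norm).const_mul L
        simpa using this
      have hnorm : Tendsto (fun dm : ℕ × ℕ => ‖iteratedFDeriv ℝ i F z.1 z.2 -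
          T dm.2 (iteratedFDeriv ℝ i F (S dm.1 z.1) fun j => S dm.1 (z.2 j))‖)
          (atTop ×ˢ atTop) (𝓝 0) := by
        have hb : ∀ dm : ℕ × ℕ,
            ‖iteratedFDeriv ℝ i F z.1 z.2 -
              T dm.2 (iteratedFDeriv ℝ i F (S dm.1 z.1) fun j => S dm.1 (z.2 j))‖
            ≤ ‖iteratedFDeriv ℝ i F z.1 z.2 - T dm.2 (iteratedFDeriv ℝ i F z.1 z.2)‖
              + L * ‖iteratedFDeriv ℝ i F z.1 z.2 -
                  (iteratedFDeriv ℝ i F (S dm.1 z.1) fun j => S dm.1 (z.2 j))‖ := by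
          intro dm
          have hsplit : iteratedFDeriv ℝ i F z.1 z.2 -
              T dm.2 (iteratedFDeriv ℝ i F (S dm.1 z.1) fun j => S dm.1 (z.2 j))
              = (iteratedFDeriv ℝ i F z.1 z.2 - T dm.2 (iteratedFDeriv ℝ i F z.1 z.2))
                + T dm.2 (iteratedFDeriv ℝ i F z.1 z.2 -
                    (iteratedFDeriv ℝ i F (S dm.1 z.1) fun j => S dm.1 (z.2 j))) := by
            rw [map_sub]; abel
          rw [hsplit]
          refine (norm_add_le _ _).trans (add_le_add_right ?_ _)
          exact ((T dm.2).le_opNorm _).trans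
            (mul_le_mul_of_nonneg_right (hTL dm.2) (norm_nonneg _))
        have hlim0 : Tendsto (fun dm : ℕ × ℕ =>
            ‖iteratedFDeriv ℝ i F z.1 z.2 - T dm.2 (iteratedFDeriv ℝ i F z.1 z.2)‖
            + L * ‖iteratedFDeriv ℝ i F z.1 z.2 -
                (iteratedFDeriv ℝ i F (S dm.1 z.1) fun j => S dm.1 (z.2 j))‖)
            (atTop ×ˢ atTop) (𝓝 0) := by
          have := (t1.comp tendsto_snd).add (t2.comp tendsto_fst)
          simpa using this
        exact squeeze_zero (fun _ => norm_nonneg _) hb hlim0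
      have hrp : Tendsto (fun dm : ℕ × ℕ => ‖iteratedFDeriv ℝ i F z.1 z.2 -
          T dm.2 (iteratedFDeriv ℝ i F (S dm.1 z.1) fun j => S dm.1 (z.2 j))‖ ^ p)
          (atTop ×ˢ atTop) (𝓝 0) := by
        have := hnorm.rpow_const (p := p) (Or.inr hp0.le)
        simpa [Real.zero_rpow hp0.ne'] using this
      have := (ENNReal.continuous_ofReal.tendsto 0).comp hrp
      simpa [Function.comp_def] using this
    -- dominated convergence
    have hDCT : Tendsto (fun dm : ℕ × ℕ =>
        ∫⁻ z, ENNReal.ofReal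
          (‖iteratedFDeriv ℝ i F z.1 z.2 -
            T dm.2 (iteratedFDeriv ℝ i F (S dm.1 z.1) fun j => S dm.1 (z.2 j))‖ ^ p)
          ∂(marginalUpTo μ i hik)) (atTop ×ˢ atTop) (𝓝 0) := by
      have := tendsto_lintegral_filter_of_dominated_convergence
        (μ := marginalUpTo μ i hik) (f := fun _ : X × (Fin i → X) => (0:ℝ≥0∞))
        (fun z => ENNReal.ofReal (K * ((1 + ‖z.1‖ ^ q) * ∏ j, (1 + ‖z.2 j‖ ^ p))))
        (Eventually.of_forall hmeasG)
        (Eventually.of_forall fun dm => ae_of_all _ fun z =>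
          ENNReal.ofReal_le_ofReal (key i hik dm.1 dm.2 z.1 z.2))
        hbfin
        (ae_of_all _ hlimG)
      simpa using this
    exact hDCT.eventually_lt_const (ENNReal.ofReal_pos.2 (Real.rpow_pos_of_pos hε p))
  -- collect over i
  have hall : ∀ᶠ dm : ℕ × ℕ in atTop ×ˢ atTop, ∀ i ∈ Finset.range (k+1), ∀ hik : i ≤ k,
      ∫⁻ z, ENNReal.ofReal
          (‖iteratedFDeriv ℝ i F z.1 z.2 -
            T dm.2 (iteratedFDeriv ℝ i F (S dm.1 z.1) fun j => S dm.1 (z.2 j))‖ ^ p)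
        ∂(marginalUpTo μ i hik) < ENNReal.ofReal (ε ^ p) := by
    rw [Filter.eventually_all_finset]
    intro i hi
    have hik : i ≤ k := Nat.lt_succ_iff.mp (Finset.mem_range.mp hi)
    exact (main i hik).mono fun dm h => fun _ => h
  rw [prod_atTop_atTop_eq] at hall
  obtain ⟨N, hN⟩ := eventually_atTop.1 hall
  refine ⟨N.1, N.2, fun d hd m hm i hik => ?_⟩
  have hthis := hN (d, m) (Prod.mk_le_mk.2 ⟨hd, hm⟩) i
    (Finset.mem_range.2 (Nat.lt_succ_of_le hik)) hik
  have hnn : ∀ v : Y, ((‖v‖₊ : ℝ≥0∞)) ^ p = ENNReal.ofReal (‖v‖ ^ p) := fun v => by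
    rw [← enorm_eq_nnnorm, ← ofReal_norm, ENNReal.ofReal_rpow_of_nonneg (norm_nonneg v) hp0.le]
  simpa only [hnn] using hthis
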